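/- Let n ≥ 2. The relative rank of the monoid wEnd P_n modulo its submonoid End P_n is equal to ⌊n/2⌋. -/

import Mathlib

/-- `α` is a weak endomorphism of the path `P_n` (with vertices `0,…,n-1` standing for
`1,…,n`): `|iα - (i+1)α| ≤ 1` for all consecutive pairs of vertices. -/
def IsWEndo {n : ℕ} (f : Function.End (Fin n)) : Prop :=
  ∀ i : ℕ, ∀ h : i + 1 < n,
    |(((f ⟨i, by omega⟩ : Fin n) : ℕ) : ℤ) - (((f ⟨i + 1, h⟩ : Fin n) : ℕ) : ℤ)| ≤ 1

/-- `α` is an endomorphism of the path `P_n`: `|iα - (i+1)α| = 1` for all consecutive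
pairs of vertices. -/
def IsEndo {n : ℕ} (f : Function.End (Fin n)) : Prop :=
  ∀ i : ℕ, ∀ h : i + 1 < n,
    |(((f ⟨i, by omega⟩ : Fin n) : ℕ) : ℤ) - (((f ⟨i + 1, h⟩ : Fin n) : ℕ) : ℤ)| = 1

namespace PathW

variable {n : ℕ}

def ev (f : Function.End (Fin n)) (i : ℕ) : ℕ :=
  if h : i < n then (f ⟨i, h⟩).val else 0

lemma ev_def (f : Function.End (Fin n)) (i : ℕ) (h : i < n) : ev f i = (f ⟨i, h⟩).val :=
  dif_pos h

lemma ev_lt (f : Function.End (Fin n)) (i : ℕ) (h : i < n) : ev f i < n := by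
  rw [ev_def f i h]; exact (f ⟨i, h⟩).isLt

lemma ev_mul (w g : Function.End (Fin n)) (i : ℕ) (h : i < n) :
    ev (w * g) i = ev w (ev g i) := by
  rw [ev_def _ i h, ev_def g i h, ev_def w _ (g ⟨i,h⟩).isLt]
  show (w (g ⟨i, h⟩)).val = _
  congr 1

lemma ev_one (i : ℕ) (h : i < n) : ev (1 : Function.End (Fin n)) i = i := by
  rw [ev_def _ i h]; rfl

lemma isWEndo_iff (f : Function.End (Fin n)) :
    IsWEndo f ↔ ∀ i : ℕ, i + 1 < n → (ev f i ≤ ev f (i+1) + 1 ∧ ev f (i+1) ≤ ev f i + 1) := by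
  constructor
  · intro hf i hi
    have := hf i hi
    rw [abs_sub_le_iff] at this
    rw [ev_def f i (by omega), ev_def f (i+1) hi]
    omega
  · intro hf i hi
    have := hf i hi
    rw [ev_def f i (by omega), ev_def f (i+1) hi] at this
    rw [abs_sub_le_iff]
    omega

lemma isEndo_iff (f : Function.End (Fin n)) :
    IsEndo f ↔ ∀ i : ℕ, i + 1 < n → (ev f i = ev f (i+1) + 1 ∨ ev f (i+1) = ev f i + 1) := by
  constructor
  · intro hf i hi
    have := hf i hi
    rw [abs_eq (by norm_num : (0:ℤ) ≤ 1)] at this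
    rw [ev_def f i (by omega), ev_def f (i+1) hi]
    omega
  · intro hf i hi
    have := hf i hi
    rw [ev_def f i (by omega), ev_def f (i+1) hi] at this
    rw [abs_eq (by norm_num : (0:ℤ) ≤ 1)]
    omega

lemma IsEndo.isWEndo {f : Function.End (Fin n)} (hf : IsEndo f) : IsWEndo f := by
  rw [isWEndo_iff]; rw [isEndo_iff] at hf
  intro i hi; have := hf i hi; omega

lemma isWEndo_one : IsWEndo (1 : Function.End (Fin n)) := by
  rw [isWEndo_iff]; intro i hi; rw [ev_one i (by omega), ev_one (i+1) hi]; omega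

/-- weak endos map adjacent-or-equal pairs to adjacent-or-equal pairs -/
lemma wendo_adj {f : Function.End (Fin n)} (hf : IsWEndo f) {a b : ℕ} (ha : a < n) (hb : b < n)
    (hab : a = b ∨ a + 1 = b ∨ b + 1 = a) :
    ev f a ≤ ev f b + 1 ∧ ev f b ≤ ev f a + 1 := by
  rw [isWEndo_iff] at hf
  rcases hab with rfl | rfl | rfl
  · omega
  · exact hf a hb
  · have := hf b ha; omega

lemma endo_adj {f : Function.End (Fin n)} (hf : IsEndo f) {a b : ℕ} (ha : a < n) (hb : b < n)
    (hab : a + 1 = b ∨ b + 1 = a) : ev f a = ev f b + 1 ∨ ev f b = ev f a + 1 := by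
  rw [isEndo_iff] at hf
  rcases hab with rfl | rfl
  · exact hf a hb
  · have := hf b ha; omega

lemma isWEndo_mul {w g : Function.End (Fin n)} (hw : IsWEndo w) (hg : IsWEndo g) :
    IsWEndo (w * g) := by
  rw [isWEndo_iff]
  intro i hi
  rw [ev_mul w g i (by omega), ev_mul w g (i+1) hi]
  rw [isWEndo_iff] at hg
  have h1 := hg i hi
  have e1 := ev_lt g i (by omega)
  have e2 := ev_lt g (i+1) hi
  exact wendo_adj hw e1 e2 (by omega)

lemma isEndo_mul {w g : Function.End (Fin n)} (hw : IsEndo w) (hg : IsEndo g) :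
    IsEndo (w * g) := by
  rw [isEndo_iff]
  intro i hi
  rw [ev_mul w g i (by omega), ev_mul w g (i+1) hi]
  rw [isEndo_iff] at hg
  have h1 := hg i hi
  have e1 := ev_lt g i (by omega)
  have e2 := ev_lt g (i+1) hi
  exact endo_adj hw e1 e2 (by omega)

/-! ### flats and image cardinality -/

def flats (f : Function.End (Fin n)) : Finset ℕ :=
  (Finset.range (n-1)).filter (fun i => ev f i = ev f (i+1))

lemma mem_flats {f : Function.End (Fin n)} {i : ℕ} :
    i ∈ flats f ↔ i < n - 1 ∧ ev f i = ev f (i+1) := by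
  simp [flats]

lemma flats_one : flats (1 : Function.End (Fin n)) = ∅ := by
  ext i
  simp only [mem_flats, Finset.notMem_empty, iff_false, not_and]
  intro hi
  rw [ev_one i (by omega), ev_one (i+1) (by omega)]
  omega

lemma isEndo_of_no_flats {f : Function.End (Fin n)} (hf : IsWEndo f) (h : flats f = ∅) :
    IsEndo f := by
  rw [isEndo_iff]
  rw [isWEndo_iff] at hf
  intro i hi
  have := hf i hi
  have : i ∉ flats f := by rw [h]; exact Finset.notMem_empty i
  rw [mem_flats] at this
  omega

lemma flats_nonempty_of_not_endo {f : Function.End (Fin n)} (hf : IsWEndo f) (h : ¬ IsEndo f) :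
    (flats f).Nonempty := by
  by_contra hne
  exact h (isEndo_of_no_flats hf (Finset.not_nonempty_iff_eq_empty.mp hne))

lemma flats_subset_mul (w g : Function.End (Fin n)) : flats g ⊆ flats (w * g) := by
  intro i hi
  rw [mem_flats] at hi ⊢
  refine ⟨hi.1, ?_⟩
  rw [ev_mul w g i (by omega), ev_mul w g (i+1) (by omega), hi.2]

lemma flats_mul_endo {w : Function.End (Fin n)} (hw : IsEndo w) (g : Function.End (Fin n))
    (hg : IsWEndo g) : flats (w * g) = flats g := by
  ext i
  rw [mem_flats, mem_flats]
  constructor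
  · rintro ⟨hi, hflat⟩
    refine ⟨hi, ?_⟩
    rw [ev_mul w g i (by omega), ev_mul w g (i+1) (by omega)] at hflat
    by_contra hne
    rw [isWEndo_iff] at hg
    have hgi := hg i (by omega)
    have e1 := ev_lt g i (by omega)
    have e2 := ev_lt g (i+1) (by omega)
    have := endo_adj hw e1 e2 (by omega)
    omega
  · rintro ⟨hi, hflat⟩
    exact ⟨hi, by rw [ev_mul w g i (by omega), ev_mul w g (i+1) (by omega), hflat]⟩

def imcard (f : Function.End (Fin n)) : ℕ := ((Finset.range n).image (ev f)).card

lemma image_ev_subset (f : Function.End (Fin n)) :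
    (Finset.range n).image (ev f) ⊆ Finset.range n := by
  intro k hk
  simp only [Finset.mem_image, Finset.mem_range] at hk ⊢
  obtain ⟨i, hi, rfl⟩ := hk
  exact ev_lt f i hi

lemma imcard_le (f : Function.End (Fin n)) : imcard f ≤ n := by
  have := Finset.card_le_card (image_ev_subset f)
  simpa [imcard] using this

lemma image_ev_mul (w g : Function.End (Fin n)) :
    (Finset.range n).image (ev (w * g)) = ((Finset.range n).image (ev g)).image (ev w) := by
  rw [Finset.image_image]
  apply Finset.image_congr
  intro i hi
  simp only [Finset.mem_coe, Finset.mem_range] at hi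
  exact ev_mul w g i hi

lemma imcard_mul_le_right (w g : Function.End (Fin n)) : imcard (w * g) ≤ imcard g := by
  rw [imcard, image_ev_mul]
  exact Finset.card_image_le

lemma imcard_mul_le_left (w g : Function.End (Fin n)) : imcard (w * g) ≤ imcard w := by
  rw [imcard, image_ev_mul]
  apply Finset.card_le_card
  apply Finset.image_subset_iff.mpr
  intro k hk
  simp only [Finset.mem_image, Finset.mem_range] at hk ⊢
  obtain ⟨i, hi, rfl⟩ := hk
  exact ⟨ev g i, ev_lt g i hi, rfl⟩

lemma imcard_le_of_flat {f : Function.End (Fin n)} {i : ℕ} (hi : i ∈ flats f) :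
    imcard f ≤ n - 1 := by
  rw [mem_flats] at hi
  have hsub : (Finset.range n).image (ev f) ⊆ ((Finset.range n).erase (i+1)).image (ev f) := by
    intro k hk
    simp only [Finset.mem_image, Finset.mem_range, Finset.mem_erase] at hk ⊢
    obtain ⟨m, hm, rfl⟩ := hk
    by_cases hmi : m = i + 1
    · exact ⟨i, ⟨by omega, by omega⟩, by rw [hmi, hi.2]⟩
    · exact ⟨m, ⟨hmi, hm⟩, rfl⟩
  calc imcard f ≤ (((Finset.range n).erase (i+1)).image (ev f)).card := Finset.card_le_card hsub
    _ ≤ ((Finset.range n).erase (i+1)).card := Finset.card_image_le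
    _ = n - 1 := by rw [Finset.card_erase_of_mem (by simp; omega), Finset.card_range]

lemma surjective_of_imcard {g : Function.End (Fin n)} (h : imcard g = n) :
    ∀ k, k < n → ∃ i, i < n ∧ ev g i = k := by
  have heq : (Finset.range n).image (ev g) = Finset.range n := by
    apply Finset.eq_of_subset_of_card_le (image_ev_subset g)
    rw [Finset.card_range]; rw [imcard] at h; omega
  intro k hk
  have : k ∈ (Finset.range n).image (ev g) := by rw [heq]; simp [hk]
  simp only [Finset.mem_image, Finset.mem_range] at this
  obtain ⟨i, hi, hev⟩ := this
  exact ⟨i, hi, hev⟩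


/-! ### special maps -/

/-- collapse at `j`: `i ↦ i` for `i ≤ j`, `i ↦ i - 1` for `i > j`. -/
def sig (n j : ℕ) : Function.End (Fin n) :=
  fun x => if x.val ≤ j then x else ⟨x.val - 1, by omega⟩

/-- the reflection `i ↦ n - 1 - i`. -/
def rho (n : ℕ) : Function.End (Fin n) :=
  fun x => ⟨n - 1 - x.val, by omega⟩

/-- the down-shift `0 ↦ 1`, `i ↦ i - 1` for `i ≥ 1`. -/
def dlt (n : ℕ) : Function.End (Fin n) :=
  fun x => if x.val = 0 then ⟨min 1 (n-1), by have := x.isLt; omega⟩ else ⟨x.val - 1, by have := x.isLt; omega⟩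

lemma ev_sig (j i : ℕ) (h : i < n) : ev (sig n j) i = if i ≤ j then i else i - 1 := by
  rw [ev_def _ i h]
  simp only [sig]
  split <;> rfl

lemma ev_rho (i : ℕ) (h : i < n) : ev (rho n) i = n - 1 - i := by
  rw [ev_def _ i h]; rfl

lemma ev_dlt (hn : 2 ≤ n) (i : ℕ) (h : i < n) :
    ev (dlt n) i = if i = 0 then 1 else i - 1 := by
  rw [ev_def _ i h]
  simp only [dlt]
  split
  · rename_i h0
    simp only [h0, if_pos]
    show min 1 (n-1) = 1
    omega
  · rfl

lemma isWEndo_sig (j : ℕ) : IsWEndo (sig n j) := by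
  rw [isWEndo_iff]
  intro i hi
  rw [ev_sig j i (by omega), ev_sig j (i+1) hi]
  split <;> split <;> omega

lemma isEndo_rho : IsEndo (rho n) := by
  rw [isEndo_iff]
  intro i hi
  rw [ev_rho i (by omega), ev_rho (i+1) hi]
  omega

lemma isEndo_dlt (hn : 2 ≤ n) : IsEndo (dlt n) := by
  rw [isEndo_iff]
  intro i hi
  rw [ev_dlt hn i (by omega), ev_dlt hn (i+1) hi]
  split <;> split <;> omega

lemma rho_mul_rho : rho n * rho n = 1 := by
  funext x
  show rho n (rho n x) = x
  have := x.isLt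
  simp only [rho]
  apply Fin.ext
  simp
  omega

lemma flats_sig {j : ℕ} (hj : j ≤ n - 2) (hn : 2 ≤ n) : flats (sig n j) = {j} := by
  ext i
  rw [mem_flats, Finset.mem_singleton]
  constructor
  · rintro ⟨hi, hflat⟩
    rw [ev_sig j i (by omega), ev_sig j (i+1) (by omega)] at hflat
    by_contra hne
    rcases Nat.lt_or_ge i j with h | h
    · rw [if_pos (by omega), if_pos (by omega)] at hflat; omega
    · rw [if_neg (by omega), if_neg (by omega)] at hflat; omega
  · rintro rfl
    refine ⟨by omega, ?_⟩
    rw [ev_sig i i (by omega), ev_sig i (i+1) (by omega), if_pos le_rfl, if_neg (by omega)]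
    omega

lemma imcard_sig {j : ℕ} (hj : j ≤ n - 2) (hn : 2 ≤ n) : imcard (sig n j) = n - 1 := by
  have : (Finset.range n).image (ev (sig n j)) = Finset.range (n-1) := by
    ext k
    simp only [Finset.mem_image, Finset.mem_range]
    constructor
    · rintro ⟨i, hi, rfl⟩
      rw [ev_sig j i hi]
      split <;> omega
    · intro hk
      by_cases h : k ≤ j
      · exact ⟨k, by omega, by rw [ev_sig j k (by omega), if_pos h]⟩
      · exact ⟨k + 1, by omega, by rw [ev_sig j (k+1) (by omega), if_neg (by omega)]; omega⟩
  rw [imcard, this, Finset.card_range]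

lemma flats_mul_rho {f : Function.End (Fin n)} {p : ℕ} (hn : 2 ≤ n)
    (hf : flats f = {p}) : flats (f * rho n) = {n - 2 - p} := by
  have hp : p < n - 1 := by
    have : p ∈ flats f := by rw [hf]; exact Finset.mem_singleton_self p
    exact (mem_flats.mp this).1
  ext i
  rw [mem_flats, Finset.mem_singleton]
  constructor
  · rintro ⟨hi, hflat⟩
    rw [ev_mul _ _ i (by omega), ev_mul _ _ (i+1) (by omega),
      ev_rho i (by omega), ev_rho (i+1) (by omega)] at hflat
    have h1 : n - 1 - (i+1) = n - 2 - i := by omega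
    have h2 : n - 1 - i = (n - 2 - i) + 1 := by omega
    rw [h1, h2] at hflat
    have : (n - 2 - i) ∈ flats f := mem_flats.mpr ⟨by omega, hflat.symm⟩
    rw [hf, Finset.mem_singleton] at this
    omega
  · rintro rfl
    have hpf : p ∈ flats f := by rw [hf]; exact Finset.mem_singleton_self p
    have hflat := (mem_flats.mp hpf).2
    refine ⟨by omega, ?_⟩
    rw [ev_mul _ _ _ (by omega), ev_mul _ _ _ (by omega),
      ev_rho _ (by omega), ev_rho _ (by omega)]
    have h1 : n - 1 - (n - 2 - p) = p + 1 := by omega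
    have h2 : n - 1 - (n - 2 - p + 1) = p := by omega
    rw [h1, h2, hflat]

/-! ### classification of bijective endomorphisms -/

lemma endo_classify (hn : 2 ≤ n) {g : Function.End (Fin n)} (he : IsEndo g)
    (hs : imcard g = n) : g = 1 ∨ g = rho n := by
  have hsurj := surjective_of_imcard hs
  -- injectivity of ev on range n
  have hinj : ∀ a b, a < n → b < n → ev g a = ev g b → a = b := by
    have hsur : Function.Surjective g := by
      intro y
      obtain ⟨i, hi, hev⟩ := hsurj y.val y.isLt
      exact ⟨⟨i, hi⟩, by apply Fin.ext; rw [← ev_def g i hi, hev]⟩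
    have hinj' : Function.Injective g := Finite.injective_iff_surjective.mpr hsur
    intro a b ha hb hev
    rw [ev_def g a ha, ev_def g b hb] at hev
    have : g ⟨a, ha⟩ = g ⟨b, hb⟩ := Fin.ext hev
    have := congrArg Fin.val (hinj' this)
    simpa using this
  rw [isEndo_iff] at he
  have he0 := he 0 (by omega)
  norm_num at he0
  rcases he0 with h0 | h0
  · -- decreasing start: ev g 0 = ev g 1 + 1
    right
    have key : ∀ i, i < n → ev g i + i = ev g 0 := by
      intro i
      induction i using Nat.strong_induction_on with
      | _ i ih =>
        match i with
        | 0 => intro _; rfl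
        | 1 => intro h1; omega
        | (k+2) =>
          intro hk2
          have hk := ih k (by omega) (by omega)
          have hk1 := ih (k+1) (by omega) (by omega)
          have hstep := he (k+1) (by omega)
          have hnorm : ev g (k+1+1) = ev g (k+2) := by norm_num
          rw [hnorm] at hstep
          rcases hstep with h | h
          · omega
          · -- up step: ev g (k+2) = ev g (k+1) + 1 = ev g k : contradiction with injectivity
            exfalso
            have : ev g (k+2) = ev g k := by omega
            have := hinj (k+2) k (by omega) (by omega) this
            omega
    have h0n : ev g 0 = n - 1 := by
      have h1 := key (n-1) (by omega)
      have h2 := ev_lt g 0 (by omega)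
      have h3 := ev_lt g (n-1) (by omega)
      omega
    funext x
    apply Fin.ext
    have hx := x.isLt
    have := key x.val hx
    show (g x).val = n - 1 - x.val
    have hgx : ev g x.val = (g x).val := by rw [ev_def g x.val hx]
    omega
  · -- increasing start
    left
    have key : ∀ i, i < n → ev g i = ev g 0 + i := by
      intro i
      induction i using Nat.strong_induction_on with
      | _ i ih =>
        match i with
        | 0 => intro _; rfl
        | 1 => intro h1; omega
        | (k+2) =>
          intro hk2
          have hk := ih k (by omega) (by omega)
          have hk1 := ih (k+1) (by omega) (by omega)
          have hstep := he (k+1) (by omega)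
          have hnorm : ev g (k+1+1) = ev g (k+2) := by norm_num
          rw [hnorm] at hstep
          rcases hstep with h | h
          · exfalso
            have : ev g (k+2) = ev g k := by omega
            have := hinj (k+2) k (by omega) (by omega) this
            omega
          · omega
    have h0n : ev g 0 = 0 := by
      have h1 := key (n-1) (by omega)
      have h3 := ev_lt g (n-1) (by omega)
      omega
    funext x
    apply Fin.ext
    have hx := x.isLt
    have := key x.val hx
    show (g x).val = x.val
    have hgx : ev g x.val = (g x).val := by rw [ev_def g x.val hx]
    omega


/-! ### lower bound -/

lemma prod_isWEndo (l : List (Function.End (Fin n))) (h : ∀ w ∈ l, IsWEndo w) :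
    IsWEndo l.prod := by
  induction l with
  | nil => simpa using isWEndo_one
  | cons w l ih =>
    rw [List.prod_cons]
    exact isWEndo_mul (h w (List.mem_cons_self))
      (ih fun x hx => h x (List.mem_cons_of_mem w hx))

lemma lb_main (hn : 2 ≤ n) (Y : Set (Function.End (Fin n))) (hY : Y ⊆ {f | IsWEndo f}) :
    ∀ l : List (Function.End (Fin n)), (∀ w ∈ l, IsEndo w ∨ w ∈ Y) →
    ∀ p, flats l.prod = {p} → imcard l.prod = n - 1 →
    ∃ y ∈ Y, (flats y = {p} ∨ flats y = {n - 2 - p}) := by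
  intro l
  induction l with
  | nil =>
    intro _ p hf _
    exfalso
    rw [List.prod_nil, flats_one] at hf
    exact (Finset.singleton_ne_empty p) hf.symm
  | cons w l ih =>
    intro hgen p hf him
    rw [List.prod_cons] at hf him
    set g := l.prod with hgdef
    have hgen' : ∀ x ∈ l, IsEndo x ∨ x ∈ Y := fun x hx => hgen x (List.mem_cons_of_mem w hx)
    have hgw : IsWEndo g :=
      prod_isWEndo l (fun x hx => (hgen' x hx).elim IsEndo.isWEndo (fun h => hY h))
    have hww : IsWEndo w := (hgen w (List.mem_cons_self)).elim IsEndo.isWEndo (fun h => hY h)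
    have hp : p < n - 1 := by
      have : p ∈ flats (w * g) := by rw [hf]; exact Finset.mem_singleton_self p
      exact (mem_flats.mp this).1
    have hrec : p ∈ flats g → ∃ y ∈ Y, (flats y = {p} ∨ flats y = {n - 2 - p}) := by
      intro hpg
      apply ih hgen' p
      · apply Finset.Subset.antisymm
        · rw [← hf]; exact flats_subset_mul w g
        · simpa using hpg
      · have h1 := imcard_mul_le_right w g
        have h2 := imcard_le_of_flat hpg
        omega
    rcases hgen w (List.mem_cons_self) with hwe | hwY
    · exact hrec (by rw [← flats_mul_endo hwe g hgw, hf]; exact Finset.mem_singleton_self p)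
    · by_cases hpg : p ∈ flats g
      · exact hrec hpg
      · have hgflats : flats g = ∅ := by
          apply Finset.eq_empty_of_forall_notMem
          intro x hx
          have hx' : x ∈ flats (w * g) := flats_subset_mul w g hx
          rw [hf, Finset.mem_singleton] at hx'
          exact hpg (hx' ▸ hx)
        have hge : IsEndo g := isEndo_of_no_flats hgw hgflats
        have hne : ev g p ≠ ev g (p + 1) := fun h => hpg (mem_flats.mpr ⟨hp, h⟩)
        have hwflat : ev w (ev g p) = ev w (ev g (p+1)) := by
          have h' : p ∈ flats (w * g) := by rw [hf]; exact Finset.mem_singleton_self p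
          have h'' := (mem_flats.mp h').2
          rwa [ev_mul w g p (by omega), ev_mul w g (p+1) (by omega)] at h''
        have himg : imcard g = n := by
          by_contra hlt
          have h1 := imcard_mul_le_right w g
          have h2 := imcard_le g
          have heq : imcard g = n - 1 := by omega
          have hio : Set.InjOn (ev w) ((Finset.range n).image (ev g)) := by
            rw [← Finset.card_image_iff, ← image_ev_mul w g, ← imcard, ← imcard, him, heq]
          have h3 : ev g p ∈ ((Finset.range n).image (ev g) : Finset ℕ) :=
            Finset.mem_image.mpr ⟨p, by simp; omega, rfl⟩
          have h4 : ev g (p+1) ∈ ((Finset.range n).image (ev g) : Finset ℕ) :=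
            Finset.mem_image.mpr ⟨p+1, by simp; omega, rfl⟩
          exact hne (hio h3 h4 hwflat)
        rcases endo_classify hn hge himg with hg1 | hg1
        · refine ⟨w, hwY, Or.inl ?_⟩
          rw [hg1, mul_one] at hf
          exact hf
        · refine ⟨w, hwY, Or.inr ?_⟩
          have hw' : w = (w * g) * rho n := by rw [hg1, mul_assoc, rho_mul_rho, mul_one]
          rw [hw']
          exact flats_mul_rho hn hf


/-! ### upper bound: generation -/

lemma val_apply (f : Function.End (Fin n)) (x : Fin n) : (f x).val = ev f x.val := by
  rw [ev_def f x.val x.isLt]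

def Y0 (n : ℕ) : Set (Function.End (Fin n)) :=
  (sig n) '' ↑(Finset.range (n / 2))

lemma sig_decomp (hn : 2 ≤ n) {j : ℕ} (hj : j ≤ n - 2) :
    sig n j = dlt n * rho n * sig n (n - 2 - j) * rho n := by
  funext x
  apply Fin.ext
  have hx := x.isLt
  rw [val_apply, val_apply]
  rw [ev_mul _ _ _ hx, ev_mul _ _ _ (ev_lt _ _ hx), ev_mul _ _ _ (ev_lt _ _ (ev_lt _ _ hx))]
  rw [ev_rho x.val hx]
  rcases le_or_gt (n - 1 - x.val) (n - 2 - j) with hc | hc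
  · have hx1 : j + 1 ≤ x.val := by omega
    have s2 : ev (sig n (n-2-j)) (n-1-x.val) = n-1-x.val := by
      rw [ev_sig _ _ (by omega), if_pos hc]
    have s3 : ev (rho n) (n-1-x.val) = x.val := by rw [ev_rho _ (by omega)]; omega
    have s4 : ev (dlt n) x.val = x.val - 1 := by
      rw [ev_dlt hn _ (by omega), if_neg (show ¬ x.val = 0 by omega)]
    have s5 : ev (sig n j) x.val = x.val - 1 := by
      rw [ev_sig _ _ hx, if_neg (show ¬ x.val ≤ j by omega)]
    rw [s2, s3, s4, s5]
  · have hx1 : x.val ≤ j := by omega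
    have s2 : ev (sig n (n-2-j)) (n-1-x.val) = n-1-x.val-1 := by
      rw [ev_sig _ _ (by omega), if_neg (show ¬ n-1-x.val ≤ n-2-j by omega)]
    have s3 : ev (rho n) (n-1-x.val-1) = x.val + 1 := by rw [ev_rho _ (by omega)]; omega
    have s4 : ev (dlt n) (x.val+1) = x.val := by
      rw [ev_dlt hn _ (by omega), if_neg (show ¬ x.val + 1 = 0 by omega)]
      omega
    have s5 : ev (sig n j) x.val = x.val := by rw [ev_sig _ _ hx, if_pos hx1]
    rw [s2, s3, s4, s5]

lemma sig_mem_closure (hn : 2 ≤ n) {j : ℕ} (hj : j ≤ n - 2) :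
    sig n j ∈ Submonoid.closure ({f : Function.End (Fin n) | IsEndo f} ∪ Y0 n) := by
  by_cases h : j < n / 2
  · exact Submonoid.subset_closure (Or.inr ⟨j, by simp [h], rfl⟩)
  · rw [sig_decomp hn hj]
    have hd := Submonoid.subset_closure
      (s := {f : Function.End (Fin n) | IsEndo f} ∪ Y0 n) (Or.inl (isEndo_dlt hn))
    have hr := Submonoid.subset_closure
      (s := {f : Function.End (Fin n) | IsEndo f} ∪ Y0 n) (Or.inl (isEndo_rho (n := n)))
    have hs := Submonoid.subset_closure
      (s := {f : Function.End (Fin n) | IsEndo f} ∪ Y0 n)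
      (Or.inr (⟨n - 2 - j, by simp; omega, rfl⟩ : sig n (n-2-j) ∈ Y0 n))
    exact mul_mem (mul_mem (mul_mem hd hr) hs) hr

lemma generation (hn : 2 ≤ n) :
    ∀ m (f : Function.End (Fin n)), IsWEndo f → (flats f).card ≤ m →
    f ∈ Submonoid.closure ({f : Function.End (Fin n) | IsEndo f} ∪ Y0 n) := by
  intro m
  induction m with
  | zero =>
    intro f hf hc
    have : flats f = ∅ := Finset.card_eq_zero.mp (by omega)
    exact Submonoid.subset_closure (Or.inl (isEndo_of_no_flats hf this))
  | succ m ih =>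
    intro f hf hc
    by_cases hflat : flats f = ∅
    · exact Submonoid.subset_closure (Or.inl (isEndo_of_no_flats hf hflat))
    · obtain ⟨j, hj⟩ := Finset.nonempty_iff_ne_empty.mpr hflat
      have hjlt : j < n - 1 := (mem_flats.mp hj).1
      have hjflat : ev f j = ev f (j+1) := (mem_flats.mp hj).2
      have hfn : ev f (n-1) < n := ev_lt f (n-1) (by omega)
      set v : ℕ := if ev f (n-1) = 0 then 1 else ev f (n-1) - 1 with hv
      have hvn : v < n := by rw [hv]; split <;> omega
      have hvne : v ≠ ev f (n-1) := by rw [hv]; split <;> omega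
      have hvadj : v ≤ ev f (n-1) + 1 ∧ ev f (n-1) ≤ v + 1 := by rw [hv]; split <;> omega
      have hgnat : ∀ i, i < n →
          (if i ≤ j then ev f i else if i ≤ n-2 then ev f (i+1) else v) < n := by
        intro i hi
        split
        · exact ev_lt f i hi
        · split
          · exact ev_lt f (i+1) (by omega)
          · exact hvn
      set g : Function.End (Fin n) := fun x =>
        ⟨if x.val ≤ j then ev f x.val else if x.val ≤ n-2 then ev f (x.val+1) else v,
          hgnat x.val x.isLt⟩ with hg
      have evg : ∀ i, ∀ h : i < n,
          ev g i = if i ≤ j then ev f i else if i ≤ n-2 then ev f (i+1) else v := by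
        intro i h
        rw [ev_def g i h]
      have hwf := (isWEndo_iff f).mp hf
      -- g is a weak endomorphism
      have hgw : IsWEndo g := by
        rw [isWEndo_iff]
        intro i hi
        rw [evg i (by omega), evg (i+1) hi]
        have hwf1 := hwf i hi
        rcases Nat.lt_trichotomy (i+1) (j+1) with h1 | h1 | h1
        · rw [if_pos (show i ≤ j by omega), if_pos (show i + 1 ≤ j by omega)]
          exact hwf1
        · have hij : i = j := by omega
          subst hij
          rw [if_pos (show i ≤ i from le_rfl), if_neg (show ¬ i + 1 ≤ i by omega)]
          by_cases h3 : i + 1 ≤ n - 2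
          · rw [if_pos h3]
            have hwf2 := hwf (i+1) (by omega)
            omega
          · rw [if_neg h3]
            have hn1 : i + 1 = n - 1 := by omega
            rw [hn1] at hjflat
            omega
        · rw [if_neg (show ¬ i ≤ j by omega), if_neg (show ¬ i + 1 ≤ j by omega)]
          by_cases h5 : i + 1 ≤ n - 2
          · rw [if_pos (show i ≤ n - 2 by omega), if_pos h5]
            exact hwf (i+1) (by omega)
          · rw [if_pos (show i ≤ n - 2 by omega), if_neg h5]
            have hn1 : i + 1 = n - 1 := by omega
            rw [hn1]
            omega
      -- flats of g inject      -- flats of g inject into (flats f).erase j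
      have hmap : ∀ k ∈ flats g, (if k < j then k else k + 1) ∈ (flats f).erase j := by
        intro k hk
        obtain ⟨hk1, hk2⟩ := mem_flats.mp hk
        rw [evg k (by omega), evg (k+1) (by omega)] at hk2
        by_cases hkj : k < j
        · rw [if_pos hkj]
          rw [if_pos (show k ≤ j by omega), if_pos (show k + 1 ≤ j by omega)] at hk2
          exact Finset.mem_erase.mpr ⟨by omega, mem_flats.mpr ⟨by omega, hk2⟩⟩
        · rw [if_neg hkj]
          rw [if_neg (show ¬ k + 1 ≤ j by omega)] at hk2
          by_cases hk3 : k + 1 ≤ n - 2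
          · rw [if_pos hk3] at hk2
            by_cases hkj2 : k ≤ j
            · have hkeq : k = j := by omega
              rw [← hkeq] at hjflat
              rw [if_pos hkj2] at hk2
              refine Finset.mem_erase.mpr ⟨by omega, mem_flats.mpr ⟨by omega, ?_⟩⟩
              omega
            · rw [if_neg hkj2, if_pos (show k ≤ n - 2 by omega)] at hk2
              exact Finset.mem_erase.mpr ⟨by omega, mem_flats.mpr ⟨by omega, hk2⟩⟩
          · exfalso
            rw [if_neg hk3] at hk2
            by_cases hkj2 : k ≤ j
            · have hkeq : k = j := by omega
              rw [← hkeq] at hjflat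
              rw [if_pos hkj2] at hk2
              have hkn : k + 1 = n - 1 := by omega
              rw [hkn] at hjflat
              omega
            · rw [if_neg hkj2, if_pos (show k ≤ n - 2 by omega)] at hk2
              have hkn : k + 1 = n - 1 := by omega
              rw [hkn] at hk2
              omega
      have hcard : (flats g).card ≤ m := by
        have h1 : (flats g).card ≤ ((flats f).erase j).card := by
          apply Finset.card_le_card_of_injOn _ hmap
          intro a ha b hb hab
          simp only at hab
          split_ifs at hab <;> omega
        have h2 : ((flats f).erase j).card = (flats f).card - 1 := Finset.card_erase_of_mem hj
        have h3 : 1 ≤ (flats f).card := Finset.card_pos.mpr ⟨j, hj⟩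
        omega
      -- f = g * sig n j
      have hfactor : f = g * sig n j := by
        funext x
        apply Fin.ext
        have hx := x.isLt
        rw [val_apply, val_apply, ev_mul _ _ _ hx, ev_sig j x.val hx]
        by_cases hxj : x.val ≤ j
        · rw [if_pos hxj, evg x.val hx, if_pos hxj]
        · rw [if_neg hxj, evg (x.val - 1) (by omega)]
          by_cases hxj2 : x.val - 1 ≤ j
          · rw [if_pos hxj2]
            have h1 : x.val - 1 = j := by omega
            have h2 : x.val = j + 1 := by omega
            rw [h1, h2, hjflat]
          · rw [if_neg hxj2, if_pos (show x.val - 1 ≤ n - 2 by omega)]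
            have h1 : x.val - 1 + 1 = x.val := by omega
            rw [h1]
      rw [hfactor]
      exact mul_mem (ih g hgw hcard) (sig_mem_closure hn (by omega))


/-! ### assembly -/

lemma sig_ne (hn : 2 ≤ n) {j1 j2 : ℕ} (h : j1 < j2) (h2 : j2 < n) : sig n j1 ≠ sig n j2 := by
  intro he
  have := congrArg (fun f : Function.End (Fin n) => ev f (j1+1)) he
  rw [ev_sig j1 (j1+1) (by omega), ev_sig j2 (j1+1) (by omega),
    if_neg (show ¬ j1 + 1 ≤ j1 by omega), if_pos (show j1 + 1 ≤ j2 by omega)] at this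
  omega

lemma Y0_ncard (hn : 2 ≤ n) : (Y0 n).ncard = n / 2 := by
  rw [Y0, Set.ncard_image_of_injOn, Set.ncard_coe_finset, Finset.card_range]
  intro a ha b hb hab
  simp only [Finset.coe_range, Set.mem_Iio] at ha hb
  by_contra hne
  rcases Nat.lt_or_ge a b with h | h
  · exact sig_ne hn h (by omega) hab
  · exact sig_ne hn (by omega) (by omega) hab.symm

lemma Y0_subset : Y0 n ⊆ {f : Function.End (Fin n) | IsWEndo f} := by
  rintro _ ⟨j, _, rfl⟩
  exact isWEndo_sig j

lemma closure_eq (hn : 2 ≤ n) :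
    (Submonoid.closure ({f : Function.End (Fin n) | IsEndo f} ∪ Y0 n) :
      Set (Function.End (Fin n))) = {f | IsWEndo f} := by
  apply Set.Subset.antisymm
  · intro f hf
    have : Submonoid.closure ({f : Function.End (Fin n) | IsEndo f} ∪ Y0 n) ≤
        { carrier := {f : Function.End (Fin n) | IsWEndo f},
          one_mem' := isWEndo_one,
          mul_mem' := fun ha hb => isWEndo_mul ha hb } := by
      rw [Submonoid.closure_le]
      rintro x (hx | hx)
      · exact IsEndo.isWEndo hx
      · exact Y0_subset hx
    exact this hf
  · intro f hf
    exact generation hn (flats f).card f hf le_rfl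

end PathW

/-- The relative rank of `wEnd P_n` modulo `End P_n` is `⌊n/2⌋`: the least cardinality of a
set `Y ⊆ wEnd P_n` such that `End P_n ∪ Y` generates the monoid `wEnd P_n`. -/
theorem relrank_wEnd_mod_End_path (n : ℕ) (hn : 2 ≤ n) :
    IsLeast {k : ℕ | ∃ Y : Set (Function.End (Fin n)),
        Y ⊆ {f | IsWEndo f} ∧
        (Submonoid.closure ({f | IsEndo f} ∪ Y) : Set (Function.End (Fin n)))
          = {f | IsWEndo f} ∧
        Y.ncard = k}
      (n / 2) := by
  constructor
  · exact ⟨PathW.Y0 n, PathW.Y0_subset, PathW.closure_eq hn, PathW.Y0_ncard hn⟩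
  · rintro k ⟨Y, hYsub, hYcl, rfl⟩
    have key : ∀ p, p < n / 2 →
        ∃ y ∈ Y, (PathW.flats y = {p} ∨ PathW.flats y = {n - 2 - p}) := by
      intro p hp
      have hp2 : p ≤ n - 2 := by omega
      have h1 : PathW.sig n p ∈ Submonoid.closure ({f : Function.End (Fin n) | IsEndo f} ∪ Y) := by
        have h2 : PathW.sig n p ∈ {f : Function.End (Fin n) | IsWEndo f} :=
          PathW.isWEndo_sig p
        rw [← hYcl] at h2
        exact h2
      obtain ⟨l, hl, hlp⟩ := Submonoid.exists_list_of_mem_closure h1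
      exact PathW.lb_main hn Y hYsub l (fun w hw => hl w hw) p
        (by rw [hlp]; exact PathW.flats_sig hp2 hn)
        (by rw [hlp]; exact PathW.imcard_sig hp2 hn)
    haveI : Inhabited (Fin n) := ⟨⟨0, by omega⟩⟩
    haveI : Finite (Function.End (Fin n)) := inferInstanceAs (Finite (Fin n → Fin n))
    choose! yf hy1 hy2 using key
    have hYfin : Y.Finite := Set.toFinite Y
    rw [Set.ncard_eq_toFinset_card Y hYfin]
    calc n / 2 = (Finset.range (n / 2)).card := (Finset.card_range _).symm
      _ ≤ hYfin.toFinset.card := by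
          apply Finset.card_le_card_of_injOn yf
          · intro p hp
            rw [Finset.mem_coe, Set.Finite.mem_toFinset]
            exact hy1 p (Finset.mem_range.mp hp)
          · intro a ha b hb hab
            simp only [Finset.coe_range, Set.mem_Iio] at ha hb
            have h2a := hy2 a ha
            have h2b := hy2 b hb
            rw [hab] at h2a
            rcases h2a with h2a | h2a <;> rcases h2b with h2b | h2b <;>
              rw [h2a] at h2b <;>
              have := Finset.singleton_inj.mp h2b <;> omega
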